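/- arXiv:1512.01215 — 3 statements merged into one kernel-verified Lean document; each statement's English description precedes it below -/
import Mathlib

section
/- Let A ∈ ℝ^{d1×d2×d3} and let P_k be an orthogonal projection matrix on ℝ^{d_k} for k = 1,2,3, with P_k^⊥ = I − P_k. For matrices B_k acting on each mode, let (B1⊗B2⊗B3)A denote the multilinear action ((B1⊗B2⊗B3)A)_{i1 i2 i3} = Σ_{j1,j2,j3} (B1)_{i1 j1}(B2)_{i2 j2}(B3)_{i3 j3} A_{j1 j2 j3}. Define Q = P1⊗P2⊗P3 + P1^⊥⊗P2⊗P3 + P1⊗P2^⊥⊗P3 + P1⊗P2⊗P3^⊥ and Q^⊥ = P1^⊥⊗P2^⊥⊗P3^⊥ + P1^⊥⊗P2^⊥⊗P3 + P1⊗P2^⊥⊗P3^⊥ + P1^⊥⊗P2⊗P3^⊥. Then ‖A‖_* ≥ ‖(P1⊗P2⊗P3)A‖_* + (1/2)‖Q^⊥ A‖_*. -/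
set_option maxHeartbeats 1000000

noncomputable section

/-- Inner product of two order-3 tensors. -/
def tip {d1 d2 d3 : ℕ} (A B : Fin d1 → Fin d2 → Fin d3 → ℝ) : ℝ :=
  ∑ j1, ∑ j2, ∑ j3, A j1 j2 j3 * B j1 j2 j3

/-- Tensor spectral norm. -/
def specNorm {d1 d2 d3 : ℕ} (A : Fin d1 → Fin d2 → Fin d3 → ℝ) : ℝ :=
  sSup {x | ∃ (u : Fin d1 → ℝ) (v : Fin d2 → ℝ) (w : Fin d3 → ℝ),
    (∑ i, u i ^ 2) ≤ 1 ∧ (∑ i, v i ^ 2) ≤ 1 ∧ (∑ i, w i ^ 2) ≤ 1 ∧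
    x = tip A (fun j1 j2 j3 => u j1 * v j2 * w j3)}

/-- Tensor nuclear norm, the dual norm of the spectral norm. -/
def nucNorm {d1 d2 d3 : ℕ} (A : Fin d1 → Fin d2 → Fin d3 → ℝ) : ℝ :=
  sSup {x | ∃ B : Fin d1 → Fin d2 → Fin d3 → ℝ, specNorm B ≤ 1 ∧ x = tip A B}

/-- Multilinear action of a triple of matrices on an order-3 tensor. -/
def act {d1 d2 d3 : ℕ} (B1 : Matrix (Fin d1) (Fin d1) ℝ) (B2 : Matrix (Fin d2) (Fin d2) ℝ)
    (B3 : Matrix (Fin d3) (Fin d3) ℝ) (A : Fin d1 → Fin d2 → Fin d3 → ℝ) :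
    Fin d1 → Fin d2 → Fin d3 → ℝ :=
  fun i1 i2 i3 => ∑ j1, ∑ j2, ∑ j3, B1 i1 j1 * B2 i2 j2 * B3 i3 j3 * A j1 j2 j3

namespace PinchAux
open Matrix

variable {d1 d2 d3 : ℕ}

lemma key_ineq (a b c a' b' c' : ℝ) (ha : 0 ≤ a) (hb : 0 ≤ b) (hc : 0 ≤ c)
    (ha' : 0 ≤ a') (hb' : 0 ≤ b') (hc' : 0 ≤ c')
    (h1 : a^2 + a'^2 ≤ 1) (h2 : b^2 + b'^2 ≤ 1) (h3 : c^2 + c'^2 ≤ 1) :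
    a*b*c + (1/2)*(a'*b' + a*b'*c' + a'*b*c') ≤ 1 := by
  have hST : (a^2+a'^2)*(b^2+b'^2) ≤ 1 := by
    nlinarith [sq_nonneg a, sq_nonneg a', sq_nonneg b, sq_nonneg b']
  have hab1 : a*b + a'*b' ≤ 1 := by
    nlinarith [sq_nonneg (a*b' - a'*b), mul_nonneg (mul_nonneg ha hb) (mul_nonneg ha' hb'),
      mul_nonneg ha hb, mul_nonneg ha' hb']
  have hm1 : a'*b' ≤ 1 := by nlinarith [sq_nonneg (a'-b')]
  have hid : (a*b'+a'*b)^2 + (a*b - a'*b')^2 = (a^2+a'^2)*(b^2+b'^2) := by ring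
  have hu0 : 0 ≤ 1 - a'*b' - a*b := by linarith
  have h3v : 0 ≤ 3*(a*b) + 3 - a'*b' := by nlinarith [mul_nonneg ha hb]
  have hprod := mul_nonneg hu0 h3v
  have hstep1 : (a*b)^2 + ((a*b'+a'*b)/2)^2 ≤ (1 - a'*b'/2)^2 := by
    nlinarith [hid, hprod, hST]
  set X := a*b with hX
  set Y := (a*b'+a'*b)/2 with hY
  have hXn : 0 ≤ X := mul_nonneg ha hb
  have hYn : 0 ≤ Y := by positivity
  have hcs : (c*X + c'*Y)^2 ≤ (c^2+c'^2)*(X^2+Y^2) := by nlinarith [sq_nonneg (c*Y - c'*X)]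
  have hZ : 0 ≤ 1 - a'*b'/2 := by linarith
  have hsq : (c*X + c'*Y)^2 ≤ (1 - a'*b'/2)^2 := by
    calc (c*X + c'*Y)^2 ≤ (c^2+c'^2)*(X^2+Y^2) := hcs
    _ ≤ 1 * ((1 - a'*b'/2)^2) := by
        apply mul_le_mul h3 hstep1 (by positivity) (by norm_num)
    _ = (1 - a'*b'/2)^2 := by ring
  have hfin : c*X + c'*Y ≤ 1 - a'*b'/2 := by
    have h0 : 0 ≤ c*X + c'*Y := by positivity
    nlinarith [hsq, h0, hZ]
  nlinarith [hfin]

lemma prod3_sum (f : Fin d1 → ℝ) (g : Fin d2 → ℝ) (h : Fin d3 → ℝ) :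
    (∑ i, f i) * (∑ i, g i) * (∑ i, h i) = ∑ p, ∑ q, ∑ r, f p * g q * h r := by
  rw [Finset.sum_mul_sum, Finset.sum_mul]
  refine Finset.sum_congr rfl fun p _ => ?_
  rw [Finset.sum_mul]
  refine Finset.sum_congr rfl fun q _ => ?_
  rw [Finset.mul_sum]

lemma tip_sum (A B : Fin d1 → Fin d2 → Fin d3 → ℝ) :
    tip A B = ∑ p : Fin d1 × Fin d2 × Fin d3, A p.1 p.2.1 p.2.2 * B p.1 p.2.1 p.2.2 := by
  simp [tip, Fintype.sum_prod_type]

lemma act_sum (M1 : Matrix (Fin d1) (Fin d1) ℝ) (M2 : Matrix (Fin d2) (Fin d2) ℝ)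
    (M3 : Matrix (Fin d3) (Fin d3) ℝ) (A : Fin d1 → Fin d2 → Fin d3 → ℝ)
    (i1 : Fin d1) (i2 : Fin d2) (i3 : Fin d3) :
    act M1 M2 M3 A i1 i2 i3
      = ∑ p : Fin d1 × Fin d2 × Fin d3,
          M1 i1 p.1 * M2 i2 p.2.1 * M3 i3 p.2.2 * A p.1 p.2.1 p.2.2 := by
  simp [act, Fintype.sum_prod_type]

lemma tip_act (M1 : Matrix (Fin d1) (Fin d1) ℝ) (M2 : Matrix (Fin d2) (Fin d2) ℝ)
    (M3 : Matrix (Fin d3) (Fin d3) ℝ) (X Y : Fin d1 → Fin d2 → Fin d3 → ℝ) :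
    tip (act M1 M2 M3 X) Y = tip X (act M1.transpose M2.transpose M3.transpose Y) := by
  rw [tip_sum, tip_sum]
  simp only [act_sum, Matrix.transpose_apply, Finset.sum_mul, Finset.mul_sum]
  rw [Finset.sum_comm]
  exact Finset.sum_congr rfl fun j _ => Finset.sum_congr rfl fun i _ => by ring

lemma act_rank1 (M1 : Matrix (Fin d1) (Fin d1) ℝ) (M2 : Matrix (Fin d2) (Fin d2) ℝ)
    (M3 : Matrix (Fin d3) (Fin d3) ℝ) (x : Fin d1 → ℝ) (y : Fin d2 → ℝ) (z : Fin d3 → ℝ) :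
    act M1 M2 M3 (fun p q r => x p * y q * z r)
      = fun i1 i2 i3 => (M1.mulVec x i1) * (M2.mulVec y i2) * (M3.mulVec z i3) := by
  funext i1 i2 i3
  simp only [act, Matrix.mulVec, dotProduct]
  rw [prod3_sum]
  exact Finset.sum_congr rfl fun p _ => Finset.sum_congr rfl fun q _ =>
    Finset.sum_congr rfl fun r _ => by ring

lemma tip_add_right (A X Y : Fin d1 → Fin d2 → Fin d3 → ℝ) :
    tip A (fun p q r => X p q r + Y p q r) = tip A X + tip A Y := by
  simp [tip, mul_add, Finset.sum_add_distrib]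

lemma tip_add_left (X Y A : Fin d1 → Fin d2 → Fin d3 → ℝ) :
    tip (fun p q r => X p q r + Y p q r) A = tip X A + tip Y A := by
  simp [tip, add_mul, Finset.sum_add_distrib]

lemma tip_smul_right (c : ℝ) (A X : Fin d1 → Fin d2 → Fin d3 → ℝ) :
    tip A (fun p q r => c * X p q r) = c * tip A X := by
  simp only [tip, Finset.mul_sum]
  exact Finset.sum_congr rfl fun p _ => Finset.sum_congr rfl fun q _ =>
    Finset.sum_congr rfl fun r _ => by ring

lemma tip_smul_left (c : ℝ) (X A : Fin d1 → Fin d2 → Fin d3 → ℝ) :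
    tip (fun p q r => c * X p q r) A = c * tip X A := by
  simp only [tip, Finset.mul_sum]
  exact Finset.sum_congr rfl fun p _ => Finset.sum_congr rfl fun q _ =>
    Finset.sum_congr rfl fun r _ => by ring

lemma entry_abs_le_one {d : ℕ} (u : Fin d → ℝ) (hu : (∑ i, u i ^ 2) ≤ 1) (p : Fin d) :
    |u p| ≤ 1 := by
  have h1 : u p ^ 2 ≤ 1 := le_trans (Finset.single_le_sum (f := fun i => u i ^ 2)
    (fun i _ => sq_nonneg _) (Finset.mem_univ p)) hu
  nlinarith [abs_nonneg (u p), sq_abs (u p)]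

lemma tip_le_abs_sum (B : Fin d1 → Fin d2 → Fin d3 → ℝ) (u : Fin d1 → ℝ) (v : Fin d2 → ℝ)
    (w : Fin d3 → ℝ) (hu : (∑ i, u i ^ 2) ≤ 1) (hv : (∑ i, v i ^ 2) ≤ 1)
    (hw : (∑ i, w i ^ 2) ≤ 1) :
    tip B (fun p q r => u p * v q * w r) ≤ ∑ p, ∑ q, ∑ r, |B p q r| := by
  refine Finset.sum_le_sum fun p _ => Finset.sum_le_sum fun q _ => Finset.sum_le_sum fun r _ => ?_
  have h2 : |u p * v q * w r| ≤ 1 := by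
    rw [abs_mul, abs_mul]
    exact mul_le_one₀ (mul_le_one₀ (entry_abs_le_one u hu p) (abs_nonneg _)
      (entry_abs_le_one v hv q)) (abs_nonneg _) (entry_abs_le_one w hw r)
  calc B p q r * (u p * v q * w r) ≤ |B p q r * (u p * v q * w r)| := le_abs_self _
    _ = |B p q r| * |u p * v q * w r| := abs_mul _ _
    _ ≤ |B p q r| * 1 := mul_le_mul_of_nonneg_left h2 (abs_nonneg _)
    _ = |B p q r| := mul_one _

lemma specSet_bdd (B : Fin d1 → Fin d2 → Fin d3 → ℝ) :
    BddAbove {x | ∃ (u : Fin d1 → ℝ) (v : Fin d2 → ℝ) (w : Fin d3 → ℝ),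
      (∑ i, u i ^ 2) ≤ 1 ∧ (∑ i, v i ^ 2) ≤ 1 ∧ (∑ i, w i ^ 2) ≤ 1 ∧
      x = tip B (fun j1 j2 j3 => u j1 * v j2 * w j3)} :=
  ⟨∑ p, ∑ q, ∑ r, |B p q r|, fun _ ⟨u, v, w, hu, hv, hw, hx⟩ =>
    hx ▸ tip_le_abs_sum B u v w hu hv hw⟩

lemma sum_sq_zero_eq {d : ℕ} {u : Fin d → ℝ} (h : (∑ i, u i ^ 2) = 0) : ∀ p, u p = 0 := by
  intro p
  have := (Finset.sum_eq_zero_iff_of_nonneg (fun i _ => sq_nonneg (u i))).1 h p (Finset.mem_univ p)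
  exact pow_eq_zero_iff (n := 2) (by norm_num) |>.1 this

/-- If `specNorm B ≤ 1` then `tip B (x ⊗ y ⊗ z) ≤ ‖x‖ ‖y‖ ‖z‖`. -/
lemma tip_rank1_le (B : Fin d1 → Fin d2 → Fin d3 → ℝ) (hB : specNorm B ≤ 1)
    (x : Fin d1 → ℝ) (y : Fin d2 → ℝ) (z : Fin d3 → ℝ) :
    tip B (fun p q r => x p * y q * z r)
      ≤ Real.sqrt (∑ i, x i ^ 2) * Real.sqrt (∑ i, y i ^ 2) * Real.sqrt (∑ i, z i ^ 2) := by
  rcases eq_or_lt_of_le (Finset.sum_nonneg fun i (_ : i ∈ Finset.univ) => sq_nonneg (x i)) with hx | hx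
  · have h0 := sum_sq_zero_eq hx.symm
    have hz0 : tip B (fun p q r => x p * y q * z r) = 0 :=
      Finset.sum_eq_zero fun p _ => Finset.sum_eq_zero fun q _ =>
        Finset.sum_eq_zero fun r _ => by simp [h0 p]
    rw [hz0, ← hx]
    simp
  rcases eq_or_lt_of_le (Finset.sum_nonneg fun i (_ : i ∈ Finset.univ) => sq_nonneg (y i)) with hy | hy
  · have h0 := sum_sq_zero_eq hy.symm
    have hz0 : tip B (fun p q r => x p * y q * z r) = 0 :=
      Finset.sum_eq_zero fun p _ => Finset.sum_eq_zero fun q _ =>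
        Finset.sum_eq_zero fun r _ => by simp [h0 q]
    rw [hz0, ← hy]
    simp
  rcases eq_or_lt_of_le (Finset.sum_nonneg fun i (_ : i ∈ Finset.univ) => sq_nonneg (z i)) with hz | hz
  · have h0 := sum_sq_zero_eq hz.symm
    have hz0 : tip B (fun p q r => x p * y q * z r) = 0 :=
      Finset.sum_eq_zero fun p _ => Finset.sum_eq_zero fun q _ =>
        Finset.sum_eq_zero fun r _ => by simp [h0 r]
    rw [hz0, ← hz]
    simp
  set nx := Real.sqrt (∑ i, x i ^ 2) with hnx
  set ny := Real.sqrt (∑ i, y i ^ 2) with hny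
  set nz := Real.sqrt (∑ i, z i ^ 2) with hnz
  have hnxp : 0 < nx := Real.sqrt_pos.2 hx
  have hnyp : 0 < ny := Real.sqrt_pos.2 hy
  have hnzp : 0 < nz := Real.sqrt_pos.2 hz
  have hxx : nx ^ 2 = ∑ i, x i ^ 2 := Real.sq_sqrt hx.le
  have hyy : ny ^ 2 = ∑ i, y i ^ 2 := Real.sq_sqrt hy.le
  have hzz : nz ^ 2 = ∑ i, z i ^ 2 := Real.sq_sqrt hz.le
  set u : Fin d1 → ℝ := fun i => nx⁻¹ * x i with hu
  set v : Fin d2 → ℝ := fun i => ny⁻¹ * y i with hv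
  set w : Fin d3 → ℝ := fun i => nz⁻¹ * z i with hw
  have hu1 : (∑ i, u i ^ 2) ≤ 1 := by
    have h : (∑ i, u i ^ 2) = nx⁻¹ ^ 2 * ∑ i, x i ^ 2 := by
      rw [Finset.mul_sum]
      exact Finset.sum_congr rfl fun i _ => by rw [hu]; ring
    rw [h, ← hxx, inv_pow, inv_mul_cancel₀ (pow_ne_zero 2 hnxp.ne')]
  have hv1 : (∑ i, v i ^ 2) ≤ 1 := by
    have h : (∑ i, v i ^ 2) = ny⁻¹ ^ 2 * ∑ i, y i ^ 2 := by
      rw [Finset.mul_sum]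
      exact Finset.sum_congr rfl fun i _ => by rw [hv]; ring
    rw [h, ← hyy, inv_pow, inv_mul_cancel₀ (pow_ne_zero 2 hnyp.ne')]
  have hw1 : (∑ i, w i ^ 2) ≤ 1 := by
    have h : (∑ i, w i ^ 2) = nz⁻¹ ^ 2 * ∑ i, z i ^ 2 := by
      rw [Finset.mul_sum]
      exact Finset.sum_congr rfl fun i _ => by rw [hw]; ring
    rw [h, ← hzz, inv_pow, inv_mul_cancel₀ (pow_ne_zero 2 hnzp.ne')]
  have hmem : tip B (fun p q r => u p * v q * w r) ≤ 1 := by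
    refine le_trans (le_csSup (specSet_bdd B) ?_) hB
    exact ⟨u, v, w, hu1, hv1, hw1, rfl⟩
  have heq : (fun p q r => x p * y q * z r)
      = (fun p q r => (nx * ny * nz) * (u p * v q * w r)) := by
    funext p q r
    rw [hu, hv, hw]
    field_simp
    try ring
  rw [heq, tip_smul_right]
  calc (nx * ny * nz) * tip B (fun p q r => u p * v q * w r)
      ≤ (nx * ny * nz) * 1 := by
        exact mul_le_mul_of_nonneg_left hmem (by positivity)
    _ = nx * ny * nz := mul_one _

/-- Entries of a tensor with spectral norm at most one are at most one in absolute value. -/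
lemma entry_le_of_spec (B : Fin d1 → Fin d2 → Fin d3 → ℝ) (hB : specNorm B ≤ 1)
    (p : Fin d1) (q : Fin d2) (r : Fin d3) : |B p q r| ≤ 1 := by
  classical
  set e1 : Fin d1 → ℝ := fun i => if i = p then 1 else 0 with he1
  set e2 : Fin d2 → ℝ := fun i => if i = q then 1 else 0 with he2
  set e3 : Fin d3 → ℝ := fun i => if i = r then 1 else 0 with he3
  have hs1 : (∑ i, e1 i ^ 2) = 1 := by simp [he1, Finset.sum_ite_eq']
  have hs2 : (∑ i, e2 i ^ 2) = 1 := by simp [he2, Finset.sum_ite_eq']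
  have hs3 : (∑ i, e3 i ^ 2) = 1 := by simp [he3, Finset.sum_ite_eq']
  have hpos := tip_rank1_le B hB e1 e2 e3
  have hneg := tip_rank1_le B hB (fun i => -e1 i) e2 e3
  have htip : tip B (fun a b c => e1 a * e2 b * e3 c) = B p q r := by
    simp [tip, he1, he2, he3, mul_ite, ite_mul, mul_zero, zero_mul, mul_one,
      Finset.sum_ite_eq', Finset.sum_ite_eq]
  have htipn : tip B (fun a b c => (-e1 a) * e2 b * e3 c) = -(B p q r) := by
    have : (fun (a : Fin d1) (b : Fin d2) (c : Fin d3) => (-e1 a) * e2 b * e3 c)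
        = fun a b c => (-1 : ℝ) * (e1 a * e2 b * e3 c) := by
      funext a b c; ring
    rw [this, tip_smul_right, htip]; ring
  have hs1' : (∑ i, (-e1 i) ^ 2) = 1 := by
    rw [← hs1]; exact Finset.sum_congr rfl fun i _ => by ring
  rw [htip, hs1, hs2, hs3] at hpos
  rw [htipn, hs1', hs2, hs3] at hneg
  simp only [Real.sqrt_one, mul_one, one_mul] at hpos hneg
  exact abs_le.2 ⟨by linarith, hpos⟩

lemma nucSet_bdd (A : Fin d1 → Fin d2 → Fin d3 → ℝ) :
    BddAbove {x | ∃ B : Fin d1 → Fin d2 → Fin d3 → ℝ, specNorm B ≤ 1 ∧ x = tip A B} := by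
  refine ⟨∑ p, ∑ q, ∑ r, |A p q r|, fun x ⟨B, hB, hx⟩ => ?_⟩
  rw [hx]
  refine Finset.sum_le_sum fun p _ => Finset.sum_le_sum fun q _ => Finset.sum_le_sum fun r _ => ?_
  calc A p q r * B p q r ≤ |A p q r * B p q r| := le_abs_self _
    _ = |A p q r| * |B p q r| := abs_mul _ _
    _ ≤ |A p q r| * 1 := mul_le_mul_of_nonneg_left (entry_le_of_spec B hB p q r) (abs_nonneg _)
    _ = |A p q r| := mul_one _

lemma spec_zero_le : specNorm (fun (_ : Fin d1) (_ : Fin d2) (_ : Fin d3) => (0:ℝ)) ≤ 1 := by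
  refine csSup_le ⟨0, 0, 0, 0, by simp, by simp, by simp, by simp [tip]⟩ ?_
  rintro x ⟨u, v, w, _, _, _, rfl⟩
  simp [tip]

lemma nucSet_nonempty (A : Fin d1 → Fin d2 → Fin d3 → ℝ) :
    Set.Nonempty {x | ∃ B : Fin d1 → Fin d2 → Fin d3 → ℝ, specNorm B ≤ 1 ∧ x = tip A B} :=
  ⟨tip A (fun _ _ _ => 0), fun _ _ _ => 0, spec_zero_le, rfl⟩

/-- Pythagoras for an orthogonal projection. -/
lemma proj_pyth {d : ℕ} (P : Matrix (Fin d) (Fin d) ℝ) (hP : P * P = P) (hPs : P.IsSymm)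
    (u : Fin d → ℝ) :
    (∑ i, (P.mulVec u) i ^ 2) + (∑ i, ((1 - P).mulVec u) i ^ 2) = ∑ i, u i ^ 2 := by
  have hkey : (∑ i, (P.mulVec u) i ^ 2) = ∑ i, u i * P.mulVec u i := by
    have h1 : P.mulVec (P.mulVec u) = P.mulVec u := by
      rw [Matrix.mulVec_mulVec, hP]
    have h2 : (P.mulVec u) ᵥ* P = P.mulVec u := by
      rw [← Matrix.mulVec_transpose, hPs.eq, Matrix.mulVec_mulVec, hP]
    calc (∑ i, (P.mulVec u) i ^ 2) = (P.mulVec u) ⬝ᵥ (P.mulVec u) := by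
          simp [dotProduct, sq]
      _ = ((P.mulVec u) ᵥ* P) ⬝ᵥ u := Matrix.dotProduct_mulVec _ _ _
      _ = (P.mulVec u) ⬝ᵥ u := by rw [h2]
      _ = u ⬝ᵥ (P.mulVec u) := dotProduct_comm _ _
      _ = ∑ i, u i * P.mulVec u i := rfl
  have hsub : ∀ i, ((1 - P).mulVec u) i = u i - (P.mulVec u) i := by
    intro i
    rw [Matrix.sub_mulVec]
    simp [Matrix.one_mulVec]
  have expand : (∑ i, ((1 - P).mulVec u) i ^ 2)
      = (∑ i, u i ^ 2) - 2 * (∑ i, u i * P.mulVec u i) + (∑ i, (P.mulVec u) i ^ 2) := by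
    have : ∀ i, ((1 - P).mulVec u) i ^ 2
        = u i ^ 2 - 2 * (u i * P.mulVec u i) + (P.mulVec u) i ^ 2 := by
      intro i; rw [hsub i]; ring
    rw [Finset.sum_congr rfl fun i _ => this i]
    rw [Finset.sum_add_distrib, Finset.sum_sub_distrib, Finset.mul_sum]
  rw [expand, hkey]
  ring

lemma sum3_add (f g : Fin d1 → Fin d2 → Fin d3 → ℝ) :
    (∑ p, ∑ q, ∑ r, f p q r) + (∑ p, ∑ q, ∑ r, g p q r)
      = ∑ p, ∑ q, ∑ r, (f p q r + g p q r) := by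
  rw [← Finset.sum_add_distrib]
  refine Finset.sum_congr rfl fun p _ => ?_
  rw [← Finset.sum_add_distrib]
  refine Finset.sum_congr rfl fun q _ => ?_
  rw [← Finset.sum_add_distrib]

lemma tip_mul_add_third (B : Fin d1 → Fin d2 → Fin d3 → ℝ) (x : Fin d1 → ℝ) (y : Fin d2 → ℝ)
    (z1 z2 : Fin d3 → ℝ) :
    tip B (fun p q r => x p * y q * (z1 r + z2 r))
      = tip B (fun p q r => x p * y q * z1 r) + tip B (fun p q r => x p * y q * z2 r) := by
  simp only [tip]
  rw [sum3_add]
  exact Finset.sum_congr rfl fun p _ => Finset.sum_congr rfl fun q _ =>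
    Finset.sum_congr rfl fun r _ => by ring

end PinchAux

/-- the pinching inequality for the tensor nuclear norm. -/
theorem stmt0 {d1 d2 d3 : ℕ}
    (P1 : Matrix (Fin d1) (Fin d1) ℝ) (P2 : Matrix (Fin d2) (Fin d2) ℝ)
    (P3 : Matrix (Fin d3) (Fin d3) ℝ)
    (hP1 : P1 * P1 = P1) (hP2 : P2 * P2 = P2) (hP3 : P3 * P3 = P3)
    (hP1s : P1.IsSymm) (hP2s : P2.IsSymm) (hP3s : P3.IsSymm)
    (A : Fin d1 → Fin d2 → Fin d3 → ℝ) :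
    nucNorm A ≥ nucNorm (act P1 P2 P3 A) +
      (1 / 2) * nucNorm
        (act (1 - P1) (1 - P2) (1 - P3) A + act (1 - P1) (1 - P2) P3 A +
          act P1 (1 - P2) (1 - P3) A + act (1 - P1) P2 (1 - P3) A) := by
  classical
  open PinchAux in
  set Q1 := 1 - P1 with hQ1def
  set Q2 := 1 - P2 with hQ2def
  set Q3 := 1 - P3 with hQ3def
  have hQ1s : Q1.IsSymm := Matrix.isSymm_one.sub hP1s
  have hQ2s : Q2.IsSymm := Matrix.isSymm_one.sub hP2s
  have hQ3s : Q3.IsSymm := Matrix.isSymm_one.sub hP3s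
  set T := act Q1 Q2 Q3 A + act Q1 Q2 P3 A + act P1 Q2 Q3 A + act Q1 P2 Q3 A with hT
  have main : ∀ B1 B2 : Fin d1 → Fin d2 → Fin d3 → ℝ, specNorm B1 ≤ 1 → specNorm B2 ≤ 1 →
      tip (act P1 P2 P3 A) B1 + (1/2) * tip T B2 ≤ nucNorm A := by
    intro B1 B2 hB1 hB2
    set Z1 := act Q1 Q2 Q3 B2 with hZ1
    set Z2 := act Q1 Q2 P3 B2 with hZ2
    set Z3 := act P1 Q2 Q3 B2 with hZ3
    set Z4 := act Q1 P2 Q3 B2 with hZ4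
    set D : Fin d1 → Fin d2 → Fin d3 → ℝ := fun p q r =>
      act P1 P2 P3 B1 p q r + (1/2) * (Z1 p q r + Z2 p q r + Z3 p q r + Z4 p q r) with hD
    -- spectral norm of the dual witness is at most one
    have hDspec : specNorm D ≤ 1 := by
      unfold specNorm
      refine csSup_le ⟨_, 0, 0, 0, by simp, by simp, by simp, rfl⟩ ?_
      rintro x ⟨u, v, w, hu, hv, hw, rfl⟩
      -- split the pairing
      have h1 : tip D (fun j1 j2 j3 => u j1 * v j2 * w j3)
          = tip (act P1 P2 P3 B1) (fun j1 j2 j3 => u j1 * v j2 * w j3)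
            + tip (fun p q r => (1/2) * (Z1 p q r + Z2 p q r + Z3 p q r + Z4 p q r))
                (fun j1 j2 j3 => u j1 * v j2 * w j3) :=
        tip_add_left _ _ _
      have h2 : tip (fun p q r => (1/2) * (Z1 p q r + Z2 p q r + Z3 p q r + Z4 p q r))
            (fun j1 j2 j3 => u j1 * v j2 * w j3)
          = (1/2) * tip (fun p q r => Z1 p q r + Z2 p q r + Z3 p q r + Z4 p q r)
                (fun j1 j2 j3 => u j1 * v j2 * w j3) :=
        tip_smul_left _ _ _
      have h3 : tip (fun p q r => Z1 p q r + Z2 p q r + Z3 p q r + Z4 p q r)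
            (fun j1 j2 j3 => u j1 * v j2 * w j3)
          = tip (fun p q r => Z1 p q r + Z2 p q r + Z3 p q r)
              (fun j1 j2 j3 => u j1 * v j2 * w j3)
            + tip Z4 (fun j1 j2 j3 => u j1 * v j2 * w j3) :=
        tip_add_left _ _ _
      have h4 : tip (fun p q r => Z1 p q r + Z2 p q r + Z3 p q r)
            (fun j1 j2 j3 => u j1 * v j2 * w j3)
          = tip (fun p q r => Z1 p q r + Z2 p q r)
              (fun j1 j2 j3 => u j1 * v j2 * w j3)
            + tip Z3 (fun j1 j2 j3 => u j1 * v j2 * w j3) :=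
        tip_add_left _ _ _
      have h5 : tip (fun p q r => Z1 p q r + Z2 p q r)
            (fun j1 j2 j3 => u j1 * v j2 * w j3)
          = tip Z1 (fun j1 j2 j3 => u j1 * v j2 * w j3)
            + tip Z2 (fun j1 j2 j3 => u j1 * v j2 * w j3) :=
        tip_add_left _ _ _
      -- move the action to the rank one tensor
      have e0 : tip (act P1 P2 P3 B1) (fun j1 j2 j3 => u j1 * v j2 * w j3)
          = tip B1 (fun p q r => P1.mulVec u p * P2.mulVec v q * P3.mulVec w r) := by
        rw [tip_act, hP1s.eq, hP2s.eq, hP3s.eq, act_rank1]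
      have e1 : tip Z1 (fun j1 j2 j3 => u j1 * v j2 * w j3)
          = tip B2 (fun p q r => Q1.mulVec u p * Q2.mulVec v q * Q3.mulVec w r) := by
        rw [hZ1, tip_act, hQ1s.eq, hQ2s.eq, hQ3s.eq, act_rank1]
      have e2 : tip Z2 (fun j1 j2 j3 => u j1 * v j2 * w j3)
          = tip B2 (fun p q r => Q1.mulVec u p * Q2.mulVec v q * P3.mulVec w r) := by
        rw [hZ2, tip_act, hQ1s.eq, hQ2s.eq, hP3s.eq, act_rank1]
      have e3 : tip Z3 (fun j1 j2 j3 => u j1 * v j2 * w j3)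
          = tip B2 (fun p q r => P1.mulVec u p * Q2.mulVec v q * Q3.mulVec w r) := by
        rw [hZ3, tip_act, hP1s.eq, hQ2s.eq, hQ3s.eq, act_rank1]
      have e4 : tip Z4 (fun j1 j2 j3 => u j1 * v j2 * w j3)
          = tip B2 (fun p q r => Q1.mulVec u p * P2.mulVec v q * Q3.mulVec w r) := by
        rw [hZ4, tip_act, hQ1s.eq, hP2s.eq, hQ3s.eq, act_rank1]
      -- combine the first two complement terms
      have hw3 : ∀ r, Q3.mulVec w r + P3.mulVec w r = w r := by
        intro r
        rw [hQ3def, Matrix.sub_mulVec]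
        simp [Matrix.one_mulVec]
      have ecomb : tip B2 (fun p q r => Q1.mulVec u p * Q2.mulVec v q * Q3.mulVec w r)
            + tip B2 (fun p q r => Q1.mulVec u p * Q2.mulVec v q * P3.mulVec w r)
          = tip B2 (fun p q r => Q1.mulVec u p * Q2.mulVec v q * w r) := by
        rw [← tip_mul_add_third]
        congr 1
        funext p q r
        rw [hw3 r]
      -- introduce the six norms
      set a := Real.sqrt (∑ i, (P1.mulVec u) i ^ 2) with hadef
      set b := Real.sqrt (∑ i, (P2.mulVec v) i ^ 2) with hbdef
      set c := Real.sqrt (∑ i, (P3.mulVec w) i ^ 2) with hcdef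
      set a' := Real.sqrt (∑ i, (Q1.mulVec u) i ^ 2) with hadef'
      set b' := Real.sqrt (∑ i, (Q2.mulVec v) i ^ 2) with hbdef'
      set c' := Real.sqrt (∑ i, (Q3.mulVec w) i ^ 2) with hcdef'
      set nw := Real.sqrt (∑ i, w i ^ 2) with hnwdef
      have ha : 0 ≤ a := Real.sqrt_nonneg _
      have hb : 0 ≤ b := Real.sqrt_nonneg _
      have hc : 0 ≤ c := Real.sqrt_nonneg _
      have ha' : 0 ≤ a' := Real.sqrt_nonneg _
      have hb' : 0 ≤ b' := Real.sqrt_nonneg _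
      have hc' : 0 ≤ c' := Real.sqrt_nonneg _
      have hnw : 0 ≤ nw := Real.sqrt_nonneg _
      have hnw1 : nw ≤ 1 := Real.sqrt_le_one.mpr hw
      have hpa : a^2 + a'^2 ≤ 1 := by
        have hp := proj_pyth P1 hP1 hP1s u
        rw [hadef, hadef', Real.sq_sqrt (Finset.sum_nonneg fun i _ => sq_nonneg _),
          Real.sq_sqrt (Finset.sum_nonneg fun i _ => sq_nonneg _)]
        rw [← hQ1def] at hp
        linarith [hp, hu]
      have hpb : b^2 + b'^2 ≤ 1 := by
        have hp := proj_pyth P2 hP2 hP2s v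
        rw [hbdef, hbdef', Real.sq_sqrt (Finset.sum_nonneg fun i _ => sq_nonneg _),
          Real.sq_sqrt (Finset.sum_nonneg fun i _ => sq_nonneg _)]
        rw [← hQ2def] at hp
        linarith [hp, hv]
      have hpc : c^2 + c'^2 ≤ 1 := by
        have hp := proj_pyth P3 hP3 hP3s w
        rw [hcdef, hcdef', Real.sq_sqrt (Finset.sum_nonneg fun i _ => sq_nonneg _),
          Real.sq_sqrt (Finset.sum_nonneg fun i _ => sq_nonneg _)]
        rw [← hQ3def] at hp
        linarith [hp, hw]
      -- bounds from the spectral norm hypotheses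
      have g0 : tip B1 (fun p q r => P1.mulVec u p * P2.mulVec v q * P3.mulVec w r)
          ≤ a * b * c := tip_rank1_le B1 hB1 _ _ _
      have g12 : tip B2 (fun p q r => Q1.mulVec u p * Q2.mulVec v q * w r)
          ≤ a' * b' * nw := tip_rank1_le B2 hB2 _ _ _
      have g3 : tip B2 (fun p q r => P1.mulVec u p * Q2.mulVec v q * Q3.mulVec w r)
          ≤ a * b' * c' := tip_rank1_le B2 hB2 _ _ _
      have g4 : tip B2 (fun p q r => Q1.mulVec u p * P2.mulVec v q * Q3.mulVec w r)
          ≤ a' * b * c' := tip_rank1_le B2 hB2 _ _ _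
      have g12' : a' * b' * nw ≤ a' * b' := mul_le_of_le_one_right (mul_nonneg ha' hb') hnw1
      have hkey := key_ineq a b c a' b' c' ha hb hc ha' hb' hc' hpa hpb hpc
      rw [h1, h2, h3, h4, h5, e0, e1, e2, e3, e4]
      linarith [ecomb, g0, g12, g3, g4, g12', hkey]
    -- the pairing identity
    have hval : tip A D = tip (act P1 P2 P3 A) B1 + (1/2) * tip T B2 := by
      have h1 : tip A D = tip A (act P1 P2 P3 B1)
          + tip A (fun p q r => (1/2) * (Z1 p q r + Z2 p q r + Z3 p q r + Z4 p q r)) :=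
        tip_add_right _ _ _
      have h2 : tip A (fun p q r => (1/2) * (Z1 p q r + Z2 p q r + Z3 p q r + Z4 p q r))
          = (1/2) * tip A (fun p q r => Z1 p q r + Z2 p q r + Z3 p q r + Z4 p q r) :=
        tip_smul_right _ _ _
      have h3 : tip A (fun p q r => Z1 p q r + Z2 p q r + Z3 p q r + Z4 p q r)
          = tip A (fun p q r => Z1 p q r + Z2 p q r + Z3 p q r) + tip A Z4 :=
        tip_add_right _ _ _
      have h4 : tip A (fun p q r => Z1 p q r + Z2 p q r + Z3 p q r)
          = tip A (fun p q r => Z1 p q r + Z2 p q r) + tip A Z3 :=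
        tip_add_right _ _ _
      have h5 : tip A (fun p q r => Z1 p q r + Z2 p q r) = tip A Z1 + tip A Z2 :=
        tip_add_right _ _ _
      have e0 : tip A (act P1 P2 P3 B1) = tip (act P1 P2 P3 A) B1 := by
        rw [tip_act P1 P2 P3 A B1, hP1s.eq, hP2s.eq, hP3s.eq]
      have e1 : tip A Z1 = tip (act Q1 Q2 Q3 A) B2 := by
        rw [hZ1, tip_act Q1 Q2 Q3 A B2, hQ1s.eq, hQ2s.eq, hQ3s.eq]
      have e2 : tip A Z2 = tip (act Q1 Q2 P3 A) B2 := by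
        rw [hZ2, tip_act Q1 Q2 P3 A B2, hQ1s.eq, hQ2s.eq, hP3s.eq]
      have e3 : tip A Z3 = tip (act P1 Q2 Q3 A) B2 := by
        rw [hZ3, tip_act P1 Q2 Q3 A B2, hP1s.eq, hQ2s.eq, hQ3s.eq]
      have e4 : tip A Z4 = tip (act Q1 P2 Q3 A) B2 := by
        rw [hZ4, tip_act Q1 P2 Q3 A B2, hQ1s.eq, hP2s.eq, hQ3s.eq]
      have t1 : tip T B2 = tip (act Q1 Q2 Q3 A + act Q1 Q2 P3 A + act P1 Q2 Q3 A) B2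
          + tip (act Q1 P2 Q3 A) B2 := tip_add_left _ _ _
      have t2 : tip (act Q1 Q2 Q3 A + act Q1 Q2 P3 A + act P1 Q2 Q3 A) B2
          = tip (act Q1 Q2 Q3 A + act Q1 Q2 P3 A) B2 + tip (act P1 Q2 Q3 A) B2 :=
        tip_add_left _ _ _
      have t3 : tip (act Q1 Q2 Q3 A + act Q1 Q2 P3 A) B2
          = tip (act Q1 Q2 Q3 A) B2 + tip (act Q1 Q2 P3 A) B2 := tip_add_left _ _ _
      rw [h1, h2, h3, h4, h5, e0, e1, e2, e3, e4, t1, t2, t3]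
      try ring
    have hle : tip A D ≤ nucNorm A := le_csSup (nucSet_bdd A) ⟨D, hDspec, rfl⟩
    rw [hval] at hle
    exact hle
  -- conclude by taking suprema
  rw [ge_iff_le]
  have h1 : nucNorm (act P1 P2 P3 A) ≤ nucNorm A - (1/2) * nucNorm T := by
    refine csSup_le (nucSet_nonempty _) ?_
    rintro x ⟨B1, hB1, rfl⟩
    have h2 : nucNorm T ≤ 2 * (nucNorm A - tip (act P1 P2 P3 A) B1) := by
      refine csSup_le (nucSet_nonempty _) ?_
      rintro y ⟨B2, hB2, rfl⟩
      have := main B1 B2 hB1 hB2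
      linarith
    linarith
  linarith

end
end

section
/- Let A ∈ ℝ^{d1×d2×d3} be a tensor whose Tucker ranks are all at most r, i.e., rank(ℳ_k(A)) ≤ r for k = 1, 2, 3, where ℳ_k is the mode-k matricization. Then ‖A‖_*² ≤ r² ‖A‖_F², i.e., the tensor nuclear norm satisfies ‖A‖_* ≤ r ‖A‖_F. Consequently, sup_{B ≠ 0, B Tucker ranks ≤ r} ‖B‖_*²/‖B‖_F² ≤ r². -/
noncomputable section

/-- Mode-1,2,3 matricizations of an order-3 tensor. -/
def matr1 {d1 d2 d3 : ℕ} (A : Fin d1 → Fin d2 → Fin d3 → ℝ) :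
    Matrix (Fin d1) (Fin d2 × Fin d3) ℝ := Matrix.of fun j1 q => A j1 q.1 q.2

def matr2 {d1 d2 d3 : ℕ} (A : Fin d1 → Fin d2 → Fin d3 → ℝ) :
    Matrix (Fin d2) (Fin d1 × Fin d3) ℝ := Matrix.of fun j2 q => A q.1 j2 q.2

def matr3 {d1 d2 d3 : ℕ} (A : Fin d1 → Fin d2 → Fin d3 → ℝ) :
    Matrix (Fin d3) (Fin d1 × Fin d2) ℝ := Matrix.of fun j3 q => A q.1 q.2 j3


open Finset Matrix


lemma sum_rot {α β γ M : Type*} [Fintype α] [Fintype β] [Fintype γ] [AddCommMonoid M]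
    (F : α → β → γ → M) :
    ∑ a, ∑ b, ∑ c, F a b c = ∑ c, ∑ a, ∑ b, F a b c :=
  calc ∑ a, ∑ b, ∑ c, F a b c
      = ∑ a, ∑ c, ∑ b, F a b c := Finset.sum_congr rfl fun a _ => Finset.sum_comm
    _ = ∑ c, ∑ a, ∑ b, F a b c := Finset.sum_comm

lemma tip_flat {d1 d2 d3 : ℕ} (A B : Fin d1 → Fin d2 → Fin d3 → ℝ) :
    tip A B = ∑ x : Fin d1 × Fin d2 × Fin d3, A x.1 x.2.1 x.2.2 * B x.1 x.2.1 x.2.2 := by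
  simp [tip, Fintype.sum_prod_type]

lemma tip_cs {d1 d2 d3 : ℕ} (A B : Fin d1 → Fin d2 → Fin d3 → ℝ) :
    tip A B ≤ Real.sqrt (∑ j1, ∑ j2, ∑ j3, (A j1 j2 j3)^2) *
      Real.sqrt (∑ j1, ∑ j2, ∑ j3, (B j1 j2 j3)^2) := by
  rw [tip_flat]
  have h := Real.sum_mul_le_sqrt_mul_sqrt (univ : Finset (Fin d1 × Fin d2 × Fin d3))
    (fun x => A x.1 x.2.1 x.2.2) (fun x => B x.1 x.2.1 x.2.2)
  simpa [Fintype.sum_prod_type] using h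

lemma rank1_sumsq {d1 d2 d3 : ℕ} (u : Fin d1 → ℝ) (v : Fin d2 → ℝ) (w : Fin d3 → ℝ) :
    ∑ j1, ∑ j2, ∑ j3, (u j1 * v j2 * w j3)^2
      = (∑ i, u i ^ 2) * ((∑ i, v i ^ 2) * (∑ i, w i ^ 2)) := by
  rw [Finset.sum_mul_sum, Finset.sum_mul_sum]
  simp only [Finset.mul_sum]
  exact Finset.sum_congr rfl fun j1 _ => Finset.sum_congr rfl fun j2 _ =>
    Finset.sum_congr rfl fun j3 _ => by ring

lemma spec_bddAbove {d1 d2 d3 : ℕ} (B : Fin d1 → Fin d2 → Fin d3 → ℝ) :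
    BddAbove {x | ∃ (u : Fin d1 → ℝ) (v : Fin d2 → ℝ) (w : Fin d3 → ℝ),
      (∑ i, u i ^ 2) ≤ 1 ∧ (∑ i, v i ^ 2) ≤ 1 ∧ (∑ i, w i ^ 2) ≤ 1 ∧
      x = tip B (fun j1 j2 j3 => u j1 * v j2 * w j3)} := by
  refine ⟨Real.sqrt (∑ j1, ∑ j2, ∑ j3, (B j1 j2 j3)^2), ?_⟩
  rintro x ⟨u, v, w, hu, hv, hw, rfl⟩
  have h := tip_cs B (fun j1 j2 j3 => u j1 * v j2 * w j3)
  have h2 : Real.sqrt (∑ j1, ∑ j2, ∑ j3, (u j1 * v j2 * w j3)^2) ≤ 1 := by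
    rw [rank1_sumsq]
    have hu0 : (0:ℝ) ≤ ∑ i, u i ^ 2 := Finset.sum_nonneg fun _ _ => sq_nonneg _
    have hv0 : (0:ℝ) ≤ ∑ i, v i ^ 2 := Finset.sum_nonneg fun _ _ => sq_nonneg _
    have hw0 : (0:ℝ) ≤ ∑ i, w i ^ 2 := Finset.sum_nonneg fun _ _ => sq_nonneg _
    have : (∑ i, u i ^ 2) * ((∑ i, v i ^ 2) * (∑ i, w i ^ 2)) ≤ 1 := by
      calc (∑ i, u i ^ 2) * ((∑ i, v i ^ 2) * (∑ i, w i ^ 2))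
          ≤ 1 * (1 * 1) := by
            apply mul_le_mul hu (mul_le_mul hv hw hw0 (le_trans hv0 hv))
              (mul_nonneg hv0 hw0) (by norm_num)
        _ = 1 := by norm_num
    calc Real.sqrt _ ≤ Real.sqrt 1 := Real.sqrt_le_sqrt this
      _ = 1 := Real.sqrt_one
  calc tip B (fun j1 j2 j3 => u j1 * v j2 * w j3)
      ≤ Real.sqrt (∑ j1, ∑ j2, ∑ j3, (B j1 j2 j3)^2) *
        Real.sqrt (∑ j1, ∑ j2, ∑ j3, (u j1 * v j2 * w j3)^2) := h
    _ ≤ Real.sqrt (∑ j1, ∑ j2, ∑ j3, (B j1 j2 j3)^2) * 1 :=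
        mul_le_mul_of_nonneg_left h2 (Real.sqrt_nonneg _)
    _ = _ := mul_one _

lemma le_spec {d1 d2 d3 : ℕ} (B : Fin d1 → Fin d2 → Fin d3 → ℝ)
    (u : Fin d1 → ℝ) (v : Fin d2 → ℝ) (w : Fin d3 → ℝ)
    (hu : (∑ i, u i ^ 2) ≤ 1) (hv : (∑ i, v i ^ 2) ≤ 1) (hw : (∑ i, w i ^ 2) ≤ 1) :
    tip B (fun j1 j2 j3 => u j1 * v j2 * w j3) ≤ specNorm B :=
  le_csSup (spec_bddAbove B) ⟨u, v, w, hu, hv, hw, rfl⟩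

lemma specNorm_nonneg {d1 d2 d3 : ℕ} (B : Fin d1 → Fin d2 → Fin d3 → ℝ) :
    0 ≤ specNorm B := by
  have h := le_spec B 0 0 0 (by simp) (by simp) (by simp)
  simpa [tip] using h

lemma slice_inner {d1 d2 : ℕ} {ι : Type*} [Fintype ι]
    (P : ι → Fin d1 → ℝ) (Q : ι → Fin d2 → ℝ) (g : ι → ℝ) (M N : Fin d1 → Fin d2 → ℝ)
    (hM : ∀ j1 j2, M j1 j2 = ∑ a, g a * (P a j1 * Q a j2)) :
    ∑ j1, ∑ j2, M j1 j2 * N j1 j2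
      = ∑ a, g a * (∑ j1, ∑ j2, N j1 j2 * (P a j1 * Q a j2)) := by
  calc ∑ j1, ∑ j2, M j1 j2 * N j1 j2
      = ∑ j1, ∑ j2, ∑ a, g a * (P a j1 * Q a j2) * N j1 j2 := by
        simp only [hM, Finset.sum_mul]
    _ = ∑ a, ∑ j1, ∑ j2, g a * (P a j1 * Q a j2) * N j1 j2 :=
        sum_rot (fun j1 j2 a => g a * (P a j1 * Q a j2) * N j1 j2)
    _ = ∑ a, g a * (∑ j1, ∑ j2, N j1 j2 * (P a j1 * Q a j2)) := by
        refine Finset.sum_congr rfl fun a _ => ?_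
        rw [Finset.mul_sum]
        refine Finset.sum_congr rfl fun j1 _ => ?_
        rw [Finset.mul_sum]
        exact Finset.sum_congr rfl fun j2 _ => by ring


set_option maxHeartbeats 2000000 in
lemma key_bound {d1 d2 d3 m n : ℕ} (A B : Fin d1 → Fin d2 → Fin d3 → ℝ)
    (p : Fin m → Fin d1 → ℝ) (q : Fin n → Fin d2 → ℝ)
    (g c : Fin m × Fin n → Fin d3 → ℝ)
    (hp1 : ∀ a, (∑ i, (p a i)^2) = 1) (hq1 : ∀ b, (∑ i, (q b i)^2) = 1)
    (HG : ∀ j1 j2 j3, A j1 j2 j3 = ∑ x : Fin m × Fin n, g x j3 * (p x.1 j1 * q x.2 j2))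
    (hcontr : ∀ x j3, (∑ j1, ∑ j2, A j1 j2 j3 * (p x.1 j1 * q x.2 j2)) = g x j3)
    (hc : ∀ x j3, c x j3 = ∑ j1, ∑ j2, B j1 j2 j3 * (p x.1 j1 * q x.2 j2))
    (hB : specNorm B ≤ 1) :
    tip A B ≤ Real.sqrt ((m : ℝ) * n) * Real.sqrt (∑ j1, ∑ j2, ∑ j3, (A j1 j2 j3)^2) := by
  classical
  -- K1
  have K1 : tip A B = ∑ x : Fin m × Fin n, ∑ j3, g x j3 * c x j3 := by
    calc tip A B = ∑ j3, ∑ j1, ∑ j2, A j1 j2 j3 * B j1 j2 j3 :=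
          sum_rot (fun j1 j2 j3 => A j1 j2 j3 * B j1 j2 j3)
      _ = ∑ j3, ∑ x : Fin m × Fin n, g x j3 * c x j3 := by
          refine Finset.sum_congr rfl fun j3 _ => ?_
          rw [slice_inner (fun x => p x.1) (fun x => q x.2) (fun x => g x j3)
            (fun j1 j2 => A j1 j2 j3) (fun j1 j2 => B j1 j2 j3) (fun j1 j2 => HG j1 j2 j3)]
          exact Finset.sum_congr rfl fun x _ => by rw [hc]
      _ = _ := Finset.sum_comm
  -- K2
  have K2 : (∑ j1, ∑ j2, ∑ j3, (A j1 j2 j3)^2)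
      = ∑ x : Fin m × Fin n, ∑ j3, (g x j3)^2 := by
    calc (∑ j1, ∑ j2, ∑ j3, (A j1 j2 j3)^2)
        = ∑ j1, ∑ j2, ∑ j3, A j1 j2 j3 * A j1 j2 j3 :=
          Finset.sum_congr rfl fun j1 _ => Finset.sum_congr rfl fun j2 _ =>
            Finset.sum_congr rfl fun j3 _ => pow_two (A j1 j2 j3)
      _ = ∑ j3, ∑ j1, ∑ j2, A j1 j2 j3 * A j1 j2 j3 :=
          sum_rot (fun j1 j2 j3 => A j1 j2 j3 * A j1 j2 j3)
      _ = ∑ j3, ∑ x : Fin m × Fin n, g x j3 * g x j3 := by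
          refine Finset.sum_congr rfl fun j3 _ => ?_
          rw [slice_inner (fun x => p x.1) (fun x => q x.2) (fun x => g x j3)
            (fun j1 j2 => A j1 j2 j3) (fun j1 j2 => A j1 j2 j3) (fun j1 j2 => HG j1 j2 j3)]
          exact Finset.sum_congr rfl fun x _ => by rw [hcontr x j3]
      _ = ∑ x : Fin m × Fin n, ∑ j3, (g x j3)^2 := by
          rw [Finset.sum_comm]
          exact Finset.sum_congr rfl fun x _ => Finset.sum_congr rfl fun j3 _ => (pow_two _).symm
  -- K3
  have K3 : ∀ x : Fin m × Fin n, Real.sqrt (∑ j3, (c x j3)^2) ≤ specNorm B := by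
    intro x
    by_cases hs : (∑ j3, (c x j3)^2) = 0
    · rw [hs, Real.sqrt_zero]; exact specNorm_nonneg B
    · have h0 : (0:ℝ) ≤ ∑ j3, (c x j3)^2 := Finset.sum_nonneg fun _ _ => sq_nonneg _
      have hpos : (0:ℝ) < ∑ j3, (c x j3)^2 := lt_of_le_of_ne h0 (Ne.symm hs)
      set s := Real.sqrt (∑ j3, (c x j3)^2) with hsdef
      have hspos : 0 < s := Real.sqrt_pos.2 hpos
      have hs2 : s^2 = ∑ j3, (c x j3)^2 := Real.sq_sqrt h0
      have hw : (∑ j3, (c x j3 / s)^2) = 1 := by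
        simp only [div_pow, ← Finset.sum_div, ← hs2]
        exact div_self (by positivity)
      have hgen : ∀ (t : ℝ) (j3 : Fin d3),
          (∑ j1, ∑ j2, B j1 j2 j3 * (p x.1 j1 * q x.2 j2 * t)) = t * c x j3 := by
        intro t j3
        rw [hc, Finset.mul_sum]
        refine Finset.sum_congr rfl fun j1 _ => ?_
        rw [Finset.mul_sum]
        exact Finset.sum_congr rfl fun j2 _ => by ring
      have htip : tip B (fun j1 j2 j3 => p x.1 j1 * q x.2 j2 * (c x j3 / s)) = s := by
        calc tip B (fun j1 j2 j3 => p x.1 j1 * q x.2 j2 * (c x j3 / s))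
            = ∑ j3, ∑ j1, ∑ j2, B j1 j2 j3 * (p x.1 j1 * q x.2 j2 * (c x j3 / s)) :=
              sum_rot (fun j1 j2 j3 => B j1 j2 j3 * (p x.1 j1 * q x.2 j2 * (c x j3 / s)))
          _ = ∑ j3, (c x j3 / s) * c x j3 := Finset.sum_congr rfl fun j3 _ => hgen _ j3
          _ = ∑ j3, (c x j3)^2 / s :=
              Finset.sum_congr rfl fun j3 _ => by ring
          _ = (∑ j3, (c x j3)^2) / s := by rw [Finset.sum_div]
          _ = s := by rw [← hs2, pow_two, mul_div_assoc, div_self (ne_of_gt hspos), mul_one]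
      calc s = tip B (fun j1 j2 j3 => p x.1 j1 * q x.2 j2 * (c x j3 / s)) := htip.symm
        _ ≤ specNorm B := le_spec B _ _ _ (le_of_eq (hp1 x.1)) (le_of_eq (hq1 x.2)) (le_of_eq hw)
  -- final chain
  have hsum1 : (∑ _x : Fin m × Fin n, (1:ℝ)^2) = (m : ℝ) * n := by
    simp [Finset.card_univ, mul_comm]
  calc tip A B = ∑ x : Fin m × Fin n, ∑ j3, g x j3 * c x j3 := K1
    _ ≤ ∑ x : Fin m × Fin n,
        Real.sqrt (∑ j3, (g x j3)^2) * Real.sqrt (∑ j3, (c x j3)^2) :=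
          Finset.sum_le_sum fun x _ => Real.sum_mul_le_sqrt_mul_sqrt _ _ _
    _ ≤ ∑ x : Fin m × Fin n, Real.sqrt (∑ j3, (g x j3)^2) * 1 :=
          Finset.sum_le_sum fun x _ => mul_le_mul_of_nonneg_left ((K3 x).trans hB)
            (Real.sqrt_nonneg _)
    _ = ∑ x : Fin m × Fin n, (1:ℝ) * Real.sqrt (∑ j3, (g x j3)^2) :=
          Finset.sum_congr rfl fun x _ => by ring
    _ ≤ Real.sqrt (∑ _x : Fin m × Fin n, (1:ℝ)^2) *
        Real.sqrt (∑ x : Fin m × Fin n, (Real.sqrt (∑ j3, (g x j3)^2))^2) :=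
          Real.sum_mul_le_sqrt_mul_sqrt _ _ _
    _ = Real.sqrt ((m : ℝ) * n) * Real.sqrt (∑ j1, ∑ j2, ∑ j3, (A j1 j2 j3)^2) := by
          rw [hsum1, K2]
          congr 2
          exact Finset.sum_congr rfl fun x _ =>
            Real.sq_sqrt (Finset.sum_nonneg fun _ _ => sq_nonneg _)

lemma euclid_inner_eq {d : ℕ} (x y : EuclideanSpace ℝ (Fin d)) :
    (inner ℝ x y : ℝ) = ∑ i, x i * y i := by
  simp [PiLp.inner_apply, RCLike.inner_apply, mul_comm]

lemma exists_onb_of_finrank_le {d r : ℕ} (V : Submodule ℝ (Fin d → ℝ))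
    (hV : Module.finrank ℝ V ≤ r) :
    ∃ (m : ℕ) (p : Fin m → (Fin d → ℝ)), m ≤ r ∧
      (∀ a a', (∑ i, p a i * p a' i) = if a = a' then (1:ℝ) else 0) ∧
      (∀ f ∈ V, ∀ i, f i = ∑ a, (∑ i', p a i' * f i') * p a i) := by
  classical
  set e : EuclideanSpace ℝ (Fin d) ≃ₗ[ℝ] (Fin d → ℝ) := WithLp.linearEquiv 2 ℝ (Fin d → ℝ) with he
  set W : Submodule ℝ (EuclideanSpace ℝ (Fin d)) := V.map (e.symm : (Fin d → ℝ) →ₗ[ℝ] EuclideanSpace ℝ (Fin d)) with hW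
  have hfr : Module.finrank ℝ W = Module.finrank ℝ V := LinearEquiv.finrank_map_eq e.symm V
  set m := Module.finrank ℝ W with hm
  have hmr : m ≤ r := hfr ▸ hV
  let b := stdOrthonormalBasis ℝ W
  refine ⟨m, fun a => e ((b a : EuclideanSpace ℝ (Fin d))), hmr, ?_, ?_⟩
  · intro a a'
    have h := b.orthonormal
    rw [orthonormal_iff_ite] at h
    have h2 := h a a'
    rw [Submodule.coe_inner, euclid_inner_eq] at h2
    exact h2
  · intro f hf i
    have hmem : e.symm f ∈ W := Submodule.mem_map_of_mem hf
    set y : W := ⟨e.symm f, hmem⟩ with hy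
    have hr := b.sum_repr y
    have hco : ((∑ a, b.repr y a • b a : W) : EuclideanSpace ℝ (Fin d))
        = ∑ a, b.repr y a • ((b a : EuclideanSpace ℝ (Fin d))) := by
      push_cast
      rfl
    have hcoord : (∑ a, b.repr y a • ((b a : EuclideanSpace ℝ (Fin d)))) i
        = ∑ a, b.repr y a * (b a : EuclideanSpace ℝ (Fin d)) i := by
      rw [WithLp.ofLp_sum, Finset.sum_apply]
      rfl
    have hrepr : ∀ a, b.repr y a = ∑ i', (b a : EuclideanSpace ℝ (Fin d)) i' * f i' := by
      intro a
      rw [b.repr_apply_apply, Submodule.coe_inner, euclid_inner_eq]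
      rfl
    have hfy : f i = ((y : EuclideanSpace ℝ (Fin d)) : Fin d → ℝ) i := rfl
    rw [hfy, ← hr, hco, hcoord]
    exact Finset.sum_congr rfl fun a _ => by rw [hrepr a]; rfl

lemma main_bound {d1 d2 d3 : ℕ} (r : ℕ) (A : Fin d1 → Fin d2 → Fin d3 → ℝ)
    (h1 : (matr1 A).rank ≤ r) (h2 : (matr2 A).rank ≤ r)
    (B : Fin d1 → Fin d2 → Fin d3 → ℝ) (hB : specNorm B ≤ 1) :
    tip A B ≤ (r : ℝ) * Real.sqrt (∑ j1, ∑ j2, ∑ j3, (A j1 j2 j3)^2) := by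
  classical
  have hV1 : Module.finrank ℝ (Submodule.span ℝ (Set.range (matr1 A)ᵀ)) ≤ r := by
    exact le_trans (le_of_eq (Matrix.rank_eq_finrank_span_cols (matr1 A)).symm) h1
  have hV2 : Module.finrank ℝ (Submodule.span ℝ (Set.range (matr2 A)ᵀ)) ≤ r := by
    exact le_trans (le_of_eq (Matrix.rank_eq_finrank_span_cols (matr2 A)).symm) h2
  obtain ⟨m, p, hm, hpo, hps⟩ := exists_onb_of_finrank_le _ hV1
  obtain ⟨n, q, hn, hqo, hqs⟩ := exists_onb_of_finrank_le _ hV2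
  have hfib1 : ∀ j2 j3, (fun i => A i j2 j3) ∈ Submodule.span ℝ (Set.range (matr1 A)ᵀ) :=
    fun j2 j3 => Submodule.subset_span ⟨(j2, j3), rfl⟩
  have hfib2 : ∀ j1 j3, (fun j2 => A j1 j2 j3) ∈ Submodule.span ℝ (Set.range (matr2 A)ᵀ) :=
    fun j1 j3 => Submodule.subset_span ⟨(j1, j3), rfl⟩
  have H1 : ∀ j1 j2 j3, A j1 j2 j3 = ∑ a, (∑ i, p a i * A i j2 j3) * p a j1 :=
    fun j1 j2 j3 => hps _ (hfib1 j2 j3) j1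
  have hAt : ∀ (a : Fin m) (j3 : Fin d3),
      (fun j2 => ∑ i, p a i * A i j2 j3) ∈ Submodule.span ℝ (Set.range (matr2 A)ᵀ) := by
    intro a j3
    have heq : (fun j2 => ∑ i, p a i * A i j2 j3)
        = ∑ i, p a i • (fun j2 => A i j2 j3) := by
      funext j2
      rw [Finset.sum_apply]
      exact Finset.sum_congr rfl fun i _ => rfl
    rw [heq]
    exact Submodule.sum_smul_mem _ _ fun i _ => hfib2 i j3
  have H2 : ∀ (a : Fin m) j2 j3, (∑ i, p a i * A i j2 j3)
      = ∑ b, (∑ i2, q b i2 * (∑ i, p a i * A i i2 j3)) * q b j2 :=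
    fun a j2 j3 => hqs _ (hAt a j3) j2
  have hp1 : ∀ a, (∑ i, (p a i)^2) = 1 := by
    intro a
    have h := hpo a a
    simp at h
    rw [← h]
    exact Finset.sum_congr rfl fun i _ => pow_two _
  have hq1 : ∀ b, (∑ i, (q b i)^2) = 1 := by
    intro b
    have h := hqo b b
    simp at h
    rw [← h]
    exact Finset.sum_congr rfl fun i _ => pow_two _
  have HG : ∀ j1 j2 j3, A j1 j2 j3 = ∑ x : Fin m × Fin n,
      (∑ i2, q x.2 i2 * (∑ i, p x.1 i * A i i2 j3)) * (p x.1 j1 * q x.2 j2) := by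
    intro j1 j2 j3
    calc A j1 j2 j3 = ∑ a, (∑ i, p a i * A i j2 j3) * p a j1 := H1 j1 j2 j3
      _ = ∑ a, (∑ b, (∑ i2, q b i2 * (∑ i, p a i * A i i2 j3)) * q b j2) * p a j1 :=
          Finset.sum_congr rfl fun a _ => by rw [H2 a j2 j3]
      _ = ∑ a, ∑ b, (∑ i2, q b i2 * (∑ i, p a i * A i i2 j3)) * (p a j1 * q b j2) := by
          refine Finset.sum_congr rfl fun a _ => ?_
          rw [Finset.sum_mul]
          exact Finset.sum_congr rfl fun b _ => by ring
      _ = ∑ x : Fin m × Fin n,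
          (∑ i2, q x.2 i2 * (∑ i, p x.1 i * A i i2 j3)) * (p x.1 j1 * q x.2 j2) := by
          rw [← Finset.univ_product_univ, Finset.sum_product]
  have hcontr : ∀ (x : Fin m × Fin n) j3,
      (∑ j1, ∑ j2, A j1 j2 j3 * (p x.1 j1 * q x.2 j2))
        = ∑ i2, q x.2 i2 * (∑ i, p x.1 i * A i i2 j3) := by
    intro x j3
    calc (∑ j1, ∑ j2, A j1 j2 j3 * (p x.1 j1 * q x.2 j2))
        = ∑ j2, ∑ j1, A j1 j2 j3 * (p x.1 j1 * q x.2 j2) := Finset.sum_comm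
      _ = ∑ j2, q x.2 j2 * (∑ j1, p x.1 j1 * A j1 j2 j3) := by
          refine Finset.sum_congr rfl fun j2 _ => ?_
          rw [Finset.mul_sum]
          exact Finset.sum_congr rfl fun j1 _ => by ring
  have hkey := key_bound A B p q
    (fun x j3 => ∑ i2, q x.2 i2 * (∑ i, p x.1 i * A i i2 j3))
    (fun x j3 => ∑ j1, ∑ j2, B j1 j2 j3 * (p x.1 j1 * q x.2 j2))
    hp1 hq1 HG hcontr (fun _ _ => rfl) hB
  have hmn : Real.sqrt ((m : ℝ) * n) ≤ (r : ℝ) := by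
    have h1 : ((m : ℝ) * n) ≤ (r : ℝ) * r := by
      have hm' : (m : ℝ) ≤ r := Nat.cast_le.2 hm
      have hn' : (n : ℝ) ≤ r := Nat.cast_le.2 hn
      exact mul_le_mul hm' hn' (Nat.cast_nonneg n) (Nat.cast_nonneg r)
    calc Real.sqrt ((m : ℝ) * n) ≤ Real.sqrt ((r : ℝ) * r) := Real.sqrt_le_sqrt h1
      _ = (r : ℝ) := Real.sqrt_mul_self (Nat.cast_nonneg r)
  calc tip A B ≤ Real.sqrt ((m : ℝ) * n) * Real.sqrt (∑ j1, ∑ j2, ∑ j3, (A j1 j2 j3)^2) := hkey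
    _ ≤ (r : ℝ) * Real.sqrt (∑ j1, ∑ j2, ∑ j3, (A j1 j2 j3)^2) :=
        mul_le_mul_of_nonneg_right hmn (Real.sqrt_nonneg _)

/-- if all Tucker ranks of `A` are at most `r`, then the tensor nuclear norm
satisfies `‖A‖_*² ≤ r² ‖A‖_F²`, i.e. `‖A‖_* ≤ r ‖A‖_F`. -/
theorem stmt8 {d1 d2 d3 : ℕ} (r : ℕ) (A : Fin d1 → Fin d2 → Fin d3 → ℝ)
    (h1 : (matr1 A).rank ≤ r) (h2 : (matr2 A).rank ≤ r) (h3 : (matr3 A).rank ≤ r) :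
    nucNorm A ^ 2 ≤ (r : ℝ) ^ 2 * (∑ j1, ∑ j2, ∑ j3, (A j1 j2 j3) ^ 2) ∧
      nucNorm A ≤ (r : ℝ) * Real.sqrt (∑ j1, ∑ j2, ∑ j3, (A j1 j2 j3) ^ 2) := by
  classical
  have hSnn : 0 ≤ (∑ j1, ∑ j2, ∑ j3, (A j1 j2 j3)^2) :=
    Finset.sum_nonneg fun _ _ => Finset.sum_nonneg fun _ _ =>
      Finset.sum_nonneg fun _ _ => sq_nonneg _
  have hbound : ∀ x ∈ {x | ∃ B : Fin d1 → Fin d2 → Fin d3 → ℝ, specNorm B ≤ 1 ∧ x = tip A B},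
      x ≤ (r : ℝ) * Real.sqrt (∑ j1, ∑ j2, ∑ j3, (A j1 j2 j3)^2) := by
    rintro x ⟨B, hB, rfl⟩
    exact main_bound r A h1 h2 B hB
  have hle : nucNorm A ≤ (r : ℝ) * Real.sqrt (∑ j1, ∑ j2, ∑ j3, (A j1 j2 j3)^2) :=
    Real.sSup_le hbound (by positivity)
  have hzero_mem : (0:ℝ) ∈ {x | ∃ B : Fin d1 → Fin d2 → Fin d3 → ℝ,
      specNorm B ≤ 1 ∧ x = tip A B} := by
    refine ⟨fun _ _ _ => 0, ?_, by simp [tip]⟩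
    refine Real.sSup_le ?_ zero_le_one
    rintro x ⟨u, v, w, _, _, _, rfl⟩
    simp [tip]
  have hnn : 0 ≤ nucNorm A :=
    le_csSup ⟨(r : ℝ) * Real.sqrt (∑ j1, ∑ j2, ∑ j3, (A j1 j2 j3)^2),
      fun x hx => hbound x hx⟩ hzero_mem
  refine ⟨?_, hle⟩
  calc nucNorm A ^ 2 ≤ ((r : ℝ) * Real.sqrt (∑ j1, ∑ j2, ∑ j3, (A j1 j2 j3)^2))^2 :=
        pow_le_pow_left₀ hnn hle 2
    _ = (r : ℝ) ^ 2 * (∑ j1, ∑ j2, ∑ j3, (A j1 j2 j3)^2) := by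
        rw [mul_pow, Real.sq_sqrt hSnn]

end
end

section
/- Let G ∈ ℝ^{d1×d2} be a random matrix with i.i.d. standard normal N(0,1) entries. Then E[ sup{ uᵀ G v : u ∈ ℝ^{d1}, v ∈ ℝ^{d2}, ‖u‖_{ℓ2} ≤ 1, ‖v‖_{ℓ1} ≤ 1 } ] ≤ 3(√d1 + √(log d2)). -/
open MeasureTheory ProbabilityTheory Filter Real
open scoped NNReal ENNReal

noncomputable section

lemma aux_iIndepFun_ae_eq {ι Ω : Type*} [MeasurableSpace Ω] {μ : Measure Ω}
    {f g : ι → Ω → ℝ} (hf : iIndepFun f μ)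
    (h : ∀ i, f i =ᵐ[μ] g i) : iIndepFun g μ := by
  rw [iIndepFun_iff_measure_inter_preimage_eq_mul] at hf ⊢
  intro S sets hsets
  have hpre : ∀ i, (f i ⁻¹' sets i : Set Ω) =ᵐ[μ] (g i ⁻¹' sets i : Set Ω) := by
    intro i
    rw [Filter.eventuallyEq_set]
    filter_upwards [h i] with ω hω
    simp [Set.mem_preimage, hω]
  have h1 : μ (⋂ i ∈ S, g i ⁻¹' sets i) = μ (⋂ i ∈ S, f i ⁻¹' sets i) := by
    refine (measure_congr ?_).symm
    rw [Filter.eventuallyEq_set]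
    have : ∀ᵐ ω ∂μ, ∀ i ∈ S, (ω ∈ f i ⁻¹' sets i ↔ ω ∈ g i ⁻¹' sets i) := by
      rw [Finset.eventually_all]
      intro i _
      have := hpre i
      rw [Filter.eventuallyEq_set] at this
      exact this
    filter_upwards [this] with ω hω
    simp only [Set.mem_iInter]
    exact ⟨fun h' i hi => (hω i hi).1 (h' i hi), fun h' i hi => (hω i hi).2 (h' i hi)⟩
  rw [h1, hf S hsets]
  exact Finset.prod_congr rfl fun i _ => measure_congr (hpre i)

lemma aux_iIndepFun_precomp {ι κ Ω : Type*} [MeasurableSpace Ω] {μ : Measure Ω}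
    {f : ι → Ω → ℝ} (e : κ → ι) (he : Function.Injective e)
    (hf : iIndepFun f μ) :
    iIndepFun (fun k => f (e k)) μ := by
  classical
  rw [iIndepFun_iff_measure_inter_preimage_eq_mul] at hf ⊢
  intro S sets hsets
  set sets' : ι → Set ℝ := fun i => ⋂ k ∈ S.filter (fun k => e k = i), sets k with hsets'
  have hfilt : ∀ k ∈ S, S.filter (fun k' => e k' = e k) = {k} := by
    intro k hk
    ext k'
    simp only [Finset.mem_filter, Finset.mem_singleton, he.eq_iff]
    exact ⟨fun h' => h'.2, fun h' => ⟨h' ▸ hk, h'⟩⟩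
  have h1 : ∀ k ∈ S, sets' (e k) = sets k := by
    intro k hk
    show (⋂ k' ∈ S.filter (fun k' => e k' = e k), sets k') = sets k
    rw [hfilt k hk]
    simp
  have hmeas : ∀ i, i ∈ S.image e → MeasurableSet (sets' i) := by
    intro i _
    exact MeasurableSet.biInter (S.filter (fun k => e k = i)).countable_toSet
      (fun k hk => hsets k (Finset.mem_filter.1 hk).1)
  have key := hf (S.image e) hmeas
  have hL : (⋂ i ∈ S.image e, f i ⁻¹' sets' i) = ⋂ k ∈ S, (fun ω => f (e k) ω) ⁻¹' sets k := by
    ext ω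
    simp only [Set.mem_iInter, Finset.mem_image, Set.mem_preimage]
    constructor
    · rintro h' k hk
      have := h' (e k) ⟨k, hk, rfl⟩
      rwa [h1 k hk] at this
    · rintro h' i ⟨k, hk, rfl⟩
      rw [h1 k hk]
      exact h' k hk
  have hR : ∏ i ∈ S.image e, μ (f i ⁻¹' sets' i) = ∏ k ∈ S, μ ((fun ω => f (e k) ω) ⁻¹' sets k) := by
    rw [Finset.prod_image (fun k _ k' _ h' => he h')]
    exact Finset.prod_congr rfl fun k hk => by rw [h1 k hk]
  rw [hL, hR] at key
  exact key

lemma aux_integrable_exp_sq_gaussian :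
    Integrable (fun x => Real.exp (4⁻¹ * x ^ 2)) (gaussianReal 0 1) := by
  rw [gaussianReal_of_var_ne_zero 0 one_ne_zero]
  have f_meas : Measurable fun x => Real.toNNReal (gaussianPDFReal 0 1 x) :=
    (measurable_gaussianPDFReal 0 1).real_toNNReal
  have heq : ∀ x : ℝ, Real.toNNReal (gaussianPDFReal 0 1 x) • Real.exp (4⁻¹ * x ^ 2)
      = (Real.sqrt (2 * π))⁻¹ * Real.exp (-(4⁻¹) * x ^ 2) := by
    intro x
    rw [NNReal.smul_def, Real.coe_toNNReal _ (gaussianPDFReal_nonneg 0 1 x)]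
    simp only [gaussianPDFReal, NNReal.coe_one, mul_one, sub_zero, smul_eq_mul]
    rw [mul_assoc, ← Real.exp_add]
    congr 2
    ring
  have : gaussianPDF 0 1 = fun x => ((Real.toNNReal (gaussianPDFReal 0 1 x) : ℝ≥0) : ℝ≥0∞) := rfl
  rw [this]
  rw [integrable_withDensity_iff_integrable_smul f_meas]
  simp only [heq]
  exact (integrable_exp_neg_mul_sq (by norm_num : (0:ℝ) < 4⁻¹)).const_mul _

lemma aux_integral_exp_sq_gaussian :
    ∫ x, Real.exp (4⁻¹ * x ^ 2) ∂(gaussianReal 0 1) = Real.sqrt 2 := by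
  rw [gaussianReal_of_var_ne_zero 0 one_ne_zero]
  have f_meas : Measurable fun x => Real.toNNReal (gaussianPDFReal 0 1 x) :=
    (measurable_gaussianPDFReal 0 1).real_toNNReal
  have : gaussianPDF 0 1 = fun x => ((Real.toNNReal (gaussianPDFReal 0 1 x) : ℝ≥0) : ℝ≥0∞) := rfl
  rw [this, integral_withDensity_eq_integral_smul f_meas]
  have heq : ∀ x : ℝ, Real.toNNReal (gaussianPDFReal 0 1 x) • Real.exp (4⁻¹ * x ^ 2)
      = (Real.sqrt (2 * π))⁻¹ * Real.exp (-(4⁻¹) * x ^ 2) := by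
    intro x
    rw [NNReal.smul_def, Real.coe_toNNReal _ (gaussianPDFReal_nonneg 0 1 x)]
    simp only [gaussianPDFReal, NNReal.coe_one, mul_one, sub_zero, smul_eq_mul]
    rw [mul_assoc, ← Real.exp_add]
    congr 2
    ring
  simp only [heq]
  rw [integral_const_mul, integral_gaussian]
  rw [← Real.sqrt_inv, ← Real.sqrt_mul (by positivity)]
  congr 1
  have hπ : π ≠ 0 := pi_ne_zero
  field_simp
  ring

set_option maxHeartbeats 1000000 in
/-- for an i.i.d. standard Gaussian `d1 × d2` matrix `G`,
`E[sup {uᵀGv : ‖u‖₂ ≤ 1, ‖v‖₁ ≤ 1}] ≤ 3(√d1 + √(log d2))`. -/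
theorem stmt17 (d1 d2 : ℕ) (hd1 : 0 < d1) (hd2 : 0 < d2)
    (Ω : Type) [MeasurableSpace Ω] (μ : Measure Ω) [IsProbabilityMeasure μ]
    (G : Ω → Fin d1 → Fin d2 → ℝ)
    (hindep : iIndepFun
      (fun (p : Fin d1 × Fin d2) ω => G ω p.1 p.2) μ)
    (hdist : ∀ i j, Measure.map (fun ω => G ω i j) μ = gaussianReal 0 1) :
    (∫ ω, sSup {x | ∃ (u : Fin d1 → ℝ) (v : Fin d2 → ℝ),
        Real.sqrt (∑ i, u i ^ 2) ≤ 1 ∧ (∑ j, |v j|) ≤ 1 ∧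
        x = ∑ i, ∑ j, u i * G ω i j * v j} ∂μ)
      ≤ 3 * (Real.sqrt d1 + Real.sqrt (Real.log d2)) := by
  classical
  haveI : NeZero d2 := ⟨hd2.ne'⟩
  have hune : (Finset.univ : Finset (Fin d2)).Nonempty := Finset.univ_nonempty
  -- measurable modification
  have hae : ∀ p : Fin d1 × Fin d2, AEMeasurable (fun ω => G ω p.1 p.2) μ := by
    intro p
    by_contra hc
    have h0 := Measure.map_of_not_aemeasurable hc
    rw [hdist p.1 p.2] at h0
    exact (IsProbabilityMeasure.ne_zero (gaussianReal 0 1)) h0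
  set G' : Fin d1 × Fin d2 → Ω → ℝ := fun p => AEMeasurable.mk _ (hae p) with hG'def
  have hG'meas : ∀ p, Measurable (G' p) := fun p => (hae p).measurable_mk
  have hG'ae : ∀ p : Fin d1 × Fin d2, (fun ω => G ω p.1 p.2) =ᵐ[μ] G' p :=
    fun p => (hae p).ae_eq_mk
  have hindep' : iIndepFun G' μ := aux_iIndepFun_ae_eq hindep hG'ae
  have hdist' : ∀ p : Fin d1 × Fin d2, Measure.map (G' p) μ = gaussianReal 0 1 := by
    intro p
    rw [← Measure.map_congr (hG'ae p)]
    exact hdist p.1 p.2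
  -- column sums of squares
  set N : Fin d2 → Ω → ℝ := fun j ω => ∑ i, (G' (i, j) ω) ^ 2 with hNdef
  have hNnonneg : ∀ j ω, 0 ≤ N j ω := fun j ω => Finset.sum_nonneg fun i _ => sq_nonneg _
  have hNmeas : ∀ j, Measurable (N j) := fun j =>
    Finset.measurable_sum _ fun i _ => (hG'meas (i, j)).pow_const 2
  set M2 : Ω → ℝ := fun ω => Finset.univ.sup' hune fun j => N j ω with hM2def
  have hM2meas : Measurable M2 := by
    have h := Finset.measurable_sup' hune fun j (_ : j ∈ Finset.univ) => hNmeas j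
    have heq : M2 = Finset.univ.sup' hune N := by
      funext ω
      rw [hM2def, Finset.sup'_apply]
    rw [heq]
    exact h
  have hNleM2 : ∀ j ω, N j ω ≤ M2 ω := by
    intro j ω
    simp only [hM2def]
    exact Finset.le_sup' (fun j => N j ω) (Finset.mem_univ j)
  have hM2nonneg : ∀ ω, 0 ≤ M2 ω := fun ω =>
    le_trans (hNnonneg (Classical.arbitrary _) ω) (hNleM2 _ ω)
  set M : Ω → ℝ := fun ω => Real.sqrt (M2 ω) with hMdef
  have hMnonneg : ∀ ω, 0 ≤ M ω := fun ω => Real.sqrt_nonneg _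
  have hMmeas : Measurable M := Real.continuous_sqrt.measurable.comp hM2meas
  -- independence within a column
  have hYindep : ∀ j : Fin d2, iIndepFun
      (fun (i : Fin d1) (ω : Ω) => (G' (i, j) ω) ^ 2) μ := by
    intro j
    have h1 : iIndepFun (fun i : Fin d1 => G' (i, j)) μ :=
      aux_iIndepFun_precomp (fun i : Fin d1 => (i, j))
        (fun a b h => by simpa using congrArg Prod.fst h) hindep'
    exact h1.comp (fun _ x => x ^ 2) fun _ => measurable_id.pow_const 2
  have hexp_cont : Continuous fun x : ℝ => Real.exp (4⁻¹ * x ^ 2) := by continuity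
  have hsingle_int : ∀ p : Fin d1 × Fin d2,
      Integrable (fun ω => Real.exp (4⁻¹ * (G' p ω) ^ 2)) μ := by
    intro p
    have h1 : Integrable (fun x => Real.exp (4⁻¹ * x ^ 2)) (Measure.map (G' p) μ) := by
      rw [hdist' p]; exact aux_integrable_exp_sq_gaussian
    rw [integrable_map_measure hexp_cont.aestronglyMeasurable (hG'meas p).aemeasurable] at h1
    exact h1
  have hsingle_val : ∀ p : Fin d1 × Fin d2,
      ∫ ω, Real.exp (4⁻¹ * (G' p ω) ^ 2) ∂μ = Real.sqrt 2 := by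
    intro p
    rw [← aux_integral_exp_sq_gaussian, ← hdist' p,
      integral_map (hG'meas p).aemeasurable hexp_cont.aestronglyMeasurable]
  have hZint : ∀ j, Integrable (fun ω => Real.exp (4⁻¹ * N j ω)) μ := by
    intro j
    have h := iIndepFun.integrable_exp_mul_sum (hYindep j)
      (fun i => (hG'meas (i, j)).pow_const 2) (s := Finset.univ)
      (fun i _ => hsingle_int (i, j))
    simpa only [hNdef, Finset.sum_apply] using h
  have hZval : ∀ j, ∫ ω, Real.exp (4⁻¹ * N j ω) ∂μ = (Real.sqrt 2) ^ d1 := by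
    intro j
    have hm := iIndepFun.mgf_sum (t := 4⁻¹) (hYindep j)
      (fun i => (hG'meas (i, j)).pow_const 2) Finset.univ
    have h2 : ∀ i : Fin d1, mgf (fun ω => (G' (i, j) ω) ^ 2) μ 4⁻¹ = Real.sqrt 2 :=
      fun i => hsingle_val (i, j)
    calc ∫ ω, Real.exp (4⁻¹ * N j ω) ∂μ
        = mgf (∑ i : Fin d1, fun ω => (G' (i, j) ω) ^ 2) μ 4⁻¹ := by
          rw [mgf]
          congr 1
          funext ω
          simp only [hNdef, Finset.sum_apply]
      _ = ∏ i : Fin d1, mgf (fun ω => (G' (i, j) ω) ^ 2) μ 4⁻¹ := hm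
      _ = (Real.sqrt 2) ^ d1 := by
          simp only [h2]
          rw [Finset.prod_const, Finset.card_univ, Fintype.card_fin]
  -- constants
  set K : ℝ := d2 * (Real.sqrt 2) ^ d1 with hKdef
  have hsqrt2 : 1 < Real.sqrt 2 := by
    have : Real.sqrt 1 < Real.sqrt 2 := Real.sqrt_lt_sqrt (by norm_num) (by norm_num)
    simpa using this
  have hd2R : (1 : ℝ) ≤ d2 := by exact_mod_cast hd2
  have hKgt1 : 1 < K := by
    have h1 : 1 < (Real.sqrt 2) ^ d1 := one_lt_pow₀ hsqrt2 hd1.ne'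
    nlinarith
  have hKpos : 0 < K := lt_trans one_pos hKgt1
  set B : ℝ := 4 * Real.log K with hBdef
  have hBpos : 0 < B := by
    have := Real.log_pos hKgt1
    rw [hBdef]; linarith
  -- exponential moment of the max
  set F : Ω → ℝ := fun ω => Real.exp (4⁻¹ * M2 ω) with hFdef
  have hFmeas : Measurable F := (measurable_const.mul hM2meas).exp
  have hFle : ∀ ω, F ω ≤ ∑ j, Real.exp (4⁻¹ * N j ω) := by
    intro ω
    obtain ⟨j, -, hj⟩ := Finset.exists_mem_eq_sup' hune fun j => N j ω
    have : F ω = Real.exp (4⁻¹ * N j ω) := by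
      simp only [hFdef, hM2def]
      rw [hj]
    rw [this]
    exact Finset.single_le_sum (f := fun j' => Real.exp (4⁻¹ * N j' ω))
      (fun j' _ => (Real.exp_pos _).le) (Finset.mem_univ j)
  have hSumint : Integrable (fun ω => ∑ j, Real.exp (4⁻¹ * N j ω)) μ :=
    integrable_finset_sum _ fun j _ => hZint j
  have hFint : Integrable F μ :=
    Integrable.mono' hSumint hFmeas.aestronglyMeasurable
      (ae_of_all _ fun ω => by
        rw [Real.norm_eq_abs, abs_of_pos (Real.exp_pos _)]
        exact hFle ω)
  have hFval : ∫ ω, F ω ∂μ ≤ K := by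
    calc ∫ ω, F ω ∂μ ≤ ∫ ω, ∑ j, Real.exp (4⁻¹ * N j ω) ∂μ :=
          integral_mono hFint hSumint hFle
      _ = ∑ j, ∫ ω, Real.exp (4⁻¹ * N j ω) ∂μ := integral_finset_sum _ fun j _ => hZint j
      _ = K := by
          simp only [hZval]
          rw [Finset.sum_const, Finset.card_univ, Fintype.card_fin, nsmul_eq_mul, hKdef]
  have hM2int : Integrable M2 μ :=
    Integrable.mono' (hFint.const_mul 4) hM2meas.aestronglyMeasurable
      (ae_of_all _ fun ω => by
        rw [Real.norm_eq_abs, abs_of_nonneg (hM2nonneg ω)]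
        have h := Real.add_one_le_exp (4⁻¹ * M2 ω)
        have : F ω = Real.exp (4⁻¹ * M2 ω) := rfl
        linarith)
  have hM2val : ∫ ω, M2 ω ∂μ ≤ B := by
    have hpt : ∀ ω, M2 ω ≤ (B - 4) + (4 / K) * F ω := by
      intro ω
      have h2 := Real.add_one_le_exp (4⁻¹ * M2 ω - Real.log K)
      rw [Real.exp_sub, Real.exp_log hKpos] at h2
      have hF : Real.exp (4⁻¹ * M2 ω) = F ω := rfl
      rw [hF] at h2
      have h3 : (4 / K) * F ω = 4 * (F ω / K) := by ring
      rw [hBdef, h3]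
      linarith
    have hRint : Integrable (fun ω => (B - 4) + (4 / K) * F ω) μ :=
      (integrable_const _).add (hFint.const_mul _)
    calc ∫ ω, M2 ω ∂μ ≤ ∫ ω, ((B - 4) + (4 / K) * F ω) ∂μ := integral_mono hM2int hRint hpt
      _ = (B - 4) + (4 / K) * ∫ ω, F ω ∂μ := by
          rw [integral_add (integrable_const _) (hFint.const_mul _), integral_const,
            integral_const_mul]
          simp
      _ ≤ (B - 4) + (4 / K) * K := by
          have h4 : (0:ℝ) ≤ 4 / K := by positivity
          nlinarith [hFval]
      _ = B := by field_simp; ring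
  have hMint : Integrable M μ :=
    Integrable.mono' (hM2int.add (integrable_const 1)) hMmeas.aestronglyMeasurable
      (ae_of_all _ fun ω => by
        rw [Real.norm_eq_abs, abs_of_nonneg (hMnonneg ω)]
        have h1 : M ω ^ 2 = M2 ω := Real.sq_sqrt (hM2nonneg ω)
        have h2 := sq_nonneg (M ω - 1)
        have h3 := hMnonneg ω
        simp only [Pi.add_apply]
        nlinarith)
  have hMval : ∫ ω, M ω ∂μ ≤ Real.sqrt B := by
    have hsB : 0 < Real.sqrt B := Real.sqrt_pos.2 hBpos
    have hsBsq : Real.sqrt B ^ 2 = B := Real.sq_sqrt hBpos.le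
    have hpt : ∀ ω, M ω ≤ (2 * Real.sqrt B)⁻¹ * (M2 ω + B) := by
      intro ω
      have h1 : M ω ^ 2 = M2 ω := Real.sq_sqrt (hM2nonneg ω)
      have h2 := sq_nonneg (M ω - Real.sqrt B)
      rw [inv_mul_eq_div, le_div_iff₀ (by positivity)]
      nlinarith
    have hRint : Integrable (fun ω => (2 * Real.sqrt B)⁻¹ * (M2 ω + B)) μ :=
      (hM2int.add (integrable_const _)).const_mul _
    calc ∫ ω, M ω ∂μ ≤ ∫ ω, (2 * Real.sqrt B)⁻¹ * (M2 ω + B) ∂μ :=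
          integral_mono hMint hRint hpt
      _ = (2 * Real.sqrt B)⁻¹ * ((∫ ω, M2 ω ∂μ) + B) := by
          rw [integral_const_mul, integral_add hM2int (integrable_const _), integral_const]
          simp
      _ ≤ (2 * Real.sqrt B)⁻¹ * (B + B) := by
          have h4 : (0:ℝ) ≤ (2 * Real.sqrt B)⁻¹ := by positivity
          nlinarith [hM2val]
      _ = Real.sqrt B := by
          rw [inv_mul_eq_div, div_eq_iff (by positivity : (2:ℝ) * Real.sqrt B ≠ 0)]
          linear_combination (-2 : ℝ) * Real.mul_self_sqrt hBpos.le
  -- numeric bound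
  have hnum : Real.sqrt B ≤ 3 * (Real.sqrt d1 + Real.sqrt (Real.log d2)) := by
    have hlogK : Real.log K = Real.log d2 + d1 * (Real.log 2 / 2) := by
      rw [hKdef, Real.log_mul (by positivity) (by positivity), Real.log_pow,
        Real.log_sqrt (by norm_num)]
    have hL : 0 ≤ Real.log d2 := Real.log_nonneg hd2R
    have hlog2 : 0 < Real.log 2 := Real.log_pos (by norm_num)
    have hd1R : (0:ℝ) ≤ d1 := Nat.cast_nonneg d1
    set a : ℝ := 4 * Real.log d2 with hadef
    set b : ℝ := 2 * Real.log 2 * d1 with hbdef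
    have hB : B = a + b := by rw [hBdef, hlogK, hadef, hbdef]; ring
    have ha : 0 ≤ a := by rw [hadef]; linarith
    have hb : 0 ≤ b := by rw [hbdef]; positivity
    have hsplit : Real.sqrt B ≤ Real.sqrt a + Real.sqrt b := by
      rw [hB]
      have h1 : a + b ≤ (Real.sqrt a + Real.sqrt b) ^ 2 := by
        nlinarith [Real.sq_sqrt ha, Real.sq_sqrt hb, Real.sqrt_nonneg a, Real.sqrt_nonneg b,
          mul_nonneg (Real.sqrt_nonneg a) (Real.sqrt_nonneg b)]
      calc Real.sqrt (a + b) ≤ Real.sqrt ((Real.sqrt a + Real.sqrt b) ^ 2) :=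
            Real.sqrt_le_sqrt h1
        _ = Real.sqrt a + Real.sqrt b := Real.sqrt_sq (by positivity)
    have h4 : Real.sqrt a = 2 * Real.sqrt (Real.log d2) := by
      rw [hadef, show (4:ℝ) * Real.log d2 = 2 ^ 2 * Real.log d2 by ring,
        Real.sqrt_mul (by positivity) _, Real.sqrt_sq (by norm_num)]
    have h5 : Real.sqrt b ≤ 3 * Real.sqrt d1 := by
      rw [hbdef, Real.sqrt_mul (by positivity) _]
      have h6 : Real.sqrt (2 * Real.log 2) ≤ 3 := by
        have h7 : 2 * Real.log 2 ≤ 9 := by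
          nlinarith [Real.log_le_sub_one_of_pos (show (0:ℝ) < 2 by norm_num)]
        calc Real.sqrt (2 * Real.log 2) ≤ Real.sqrt 9 := Real.sqrt_le_sqrt h7
          _ = 3 := by
            rw [show (9:ℝ) = 3 ^ 2 by norm_num, Real.sqrt_sq (by norm_num)]
      exact mul_le_mul_of_nonneg_right h6 (Real.sqrt_nonneg _)
    have hsqL : 0 ≤ Real.sqrt (Real.log d2) := Real.sqrt_nonneg _
    linarith
  -- step 1 : the supremum is bounded by M
  have hstep1 : (∫ ω, sSup {x | ∃ (u : Fin d1 → ℝ) (v : Fin d2 → ℝ),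
        Real.sqrt (∑ i, u i ^ 2) ≤ 1 ∧ (∑ j, |v j|) ≤ 1 ∧
        x = ∑ i, ∑ j, u i * G ω i j * v j} ∂μ) ≤ ∫ ω, M ω ∂μ := by
    apply integral_mono_of_nonneg ?_ hMint ?_
    · apply ae_of_all
      intro ω
      simp only [Pi.zero_apply]
      have h0mem : (0:ℝ) ∈ {x | ∃ (u : Fin d1 → ℝ) (v : Fin d2 → ℝ),
          Real.sqrt (∑ i, u i ^ 2) ≤ 1 ∧ (∑ j, |v j|) ≤ 1 ∧
          x = ∑ i, ∑ j, u i * G ω i j * v j} := by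
        refine ⟨0, 0, by simp, by simp, by simp⟩
      by_cases hbdd : BddAbove {x | ∃ (u : Fin d1 → ℝ) (v : Fin d2 → ℝ),
          Real.sqrt (∑ i, u i ^ 2) ≤ 1 ∧ (∑ j, |v j|) ≤ 1 ∧
          x = ∑ i, ∑ j, u i * G ω i j * v j}
      · exact le_csSup hbdd h0mem
      · rw [csSup_of_not_bddAbove hbdd, Real.sSup_empty]
    · have hall : ∀ᵐ ω ∂μ, ∀ p : Fin d1 × Fin d2, G ω p.1 p.2 = G' p ω :=
        ae_all_iff.2 fun p => hG'ae p
      filter_upwards [hall] with ω hω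
      have h0mem : (0:ℝ) ∈ {x | ∃ (u : Fin d1 → ℝ) (v : Fin d2 → ℝ),
          Real.sqrt (∑ i, u i ^ 2) ≤ 1 ∧ (∑ j, |v j|) ≤ 1 ∧
          x = ∑ i, ∑ j, u i * G ω i j * v j} := ⟨0, 0, by simp, by simp, by simp⟩
      apply csSup_le ⟨0, h0mem⟩
      rintro x ⟨u, v, hu, hv, rfl⟩
      have hrw : ∑ i, ∑ j, u i * G ω i j * v j = ∑ j, (∑ i, u i * G' (i, j) ω) * v j := by
        rw [Finset.sum_comm]
        refine Finset.sum_congr rfl fun j _ => ?_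
        rw [Finset.sum_mul]
        refine Finset.sum_congr rfl fun i _ => ?_
        rw [hω (i, j)]
      rw [hrw]
      have hcol : ∀ j, |∑ i, u i * G' (i, j) ω| ≤ M ω := by
        intro j
        have hcs := Finset.sum_mul_sq_le_sq_mul_sq Finset.univ u fun i => G' (i, j) ω
        have h1 : |∑ i, u i * G' (i, j) ω|
            = Real.sqrt ((∑ i, u i * G' (i, j) ω) ^ 2) := (Real.sqrt_sq_eq_abs _).symm
        rw [h1]
        have hNj : (∑ i, (G' (i, j) ω) ^ 2) = N j ω := by rw [hNdef]
        calc Real.sqrt ((∑ i, u i * G' (i, j) ω) ^ 2)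
            ≤ Real.sqrt ((∑ i, u i ^ 2) * ∑ i, (G' (i, j) ω) ^ 2) := Real.sqrt_le_sqrt hcs
          _ = Real.sqrt (∑ i, u i ^ 2) * Real.sqrt (N j ω) := by
              rw [Real.sqrt_mul (Finset.sum_nonneg fun i _ => sq_nonneg _), hNj]
          _ ≤ 1 * M ω := by
              apply mul_le_mul hu _ (Real.sqrt_nonneg _) zero_le_one
              exact Real.sqrt_le_sqrt (hNleM2 j ω)
          _ = M ω := one_mul _
      calc ∑ j, (∑ i, u i * G' (i, j) ω) * v j
          ≤ ∑ j, M ω * |v j| := by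
            apply Finset.sum_le_sum
            intro j _
            calc (∑ i, u i * G' (i, j) ω) * v j ≤ |(∑ i, u i * G' (i, j) ω) * v j| :=
                  le_abs_self _
              _ = |∑ i, u i * G' (i, j) ω| * |v j| := abs_mul _ _
              _ ≤ M ω * |v j| := mul_le_mul_of_nonneg_right (hcol j) (abs_nonneg _)
        _ = M ω * ∑ j, |v j| := by rw [Finset.mul_sum]
        _ ≤ M ω * 1 := mul_le_mul_of_nonneg_left hv (hMnonneg ω)
        _ = M ω := mul_one _
  calc (∫ ω, sSup {x | ∃ (u : Fin d1 → ℝ) (v : Fin d2 → ℝ),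
        Real.sqrt (∑ i, u i ^ 2) ≤ 1 ∧ (∑ j, |v j|) ≤ 1 ∧
        x = ∑ i, ∑ j, u i * G ω i j * v j} ∂μ)
      ≤ ∫ ω, M ω ∂μ := hstep1
    _ ≤ Real.sqrt B := hMval
    _ ≤ 3 * (Real.sqrt d1 + Real.sqrt (Real.log d2)) := hnum

end
end
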